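/- Let P′ be a set of vertices (with relations ⊑, ≬, ∥ satisfying A1–A4 on a total presentation order ≺) such that any x, y, z ∈ P′ with x ≬ y ≺ z satisfy x ∥ z or y ∥ z. Let R be the set of vertices of P′ with no ≬-neighbor to the right (i.e., no z ∈ P′ with x ≬ z). Then every vertex of P′ \ R has at most one ≬-neighbor to the right within P′ \ R; in particular, the graph on P′ \ R with edges the ≬-pairs is a forest. -/

import Mathlib

/-- **The non-terminal primary vertices induce a forest (Lemma `primary-coloring-2`,
structural part).**  Let `P′` be a set of vertices with a strict total presentation order
`<`, partitioned into pairwise disjoint relations `inc` (⊑), `ov` (≬), `par` (∥)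
satisfying (A1)–(A4), and suppose any `x ≬ y < z` satisfy `x ∥ z` or `y ∥ z`.
Let `R` be the set of vertices with no `≬`-neighbor to the right.  Then every vertex of
`P′ ∖ R` has at most one `≬`-neighbor to the right within `P′ ∖ R`; in particular the
graph on `P′ ∖ R` whose edges are the `≬`-pairs is a forest (acyclic). -/
theorem nonterminal_primaries_forest {V : Type*} [Fintype V] [LinearOrder V]
    (inc ov par : V → V → Prop)
    (hpart : ∀ x y : V, x < y ↔ (inc x y ∨ ov x y ∨ par x y))
    (hdisj₁ : ∀ x y, inc x y → ¬ ov x y) (hdisj₂ : ∀ x y, inc x y → ¬ par x y)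
    (hdisj₃ : ∀ x y, ov x y → ¬ par x y)
    (hA1 : ∀ x y z, inc x y → inc y z → inc x z)
    (hA2 : ∀ x y z, inc x y → ov y z → inc x z ∨ ov x z)
    (hA3 : ∀ x y z, ov x y → inc y z → ov x z ∨ par x z)
    (hA4 : ∀ x y z, par x y → y < z → par x z)
    (hcond : ∀ x y z, ov x y → y < z → par x z ∨ par y z) :
    (∀ x z₁ z₂ : V, (∃ w, ov z₁ w) → (∃ w, ov z₂ w) →
        ov x z₁ → ov x z₂ → z₁ = z₂) ∧
    (SimpleGraph.fromRel
        (fun a b : {x : V // ∃ w, ov x w} => ov a.1 b.1)).IsAcyclic := by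
  classical
  have hovlt : ∀ x y, ov x y → x < y := fun x y h => (hpart x y).2 (Or.inr (Or.inl h))
  have main : ∀ x z₁ z₂ : V, (∃ w, ov z₁ w) → ov x z₁ → ov x z₂ → z₁ < z₂ → False := by
    rintro x z₁ z₂ ⟨w, hw⟩ h1 h2 hlt
    have hpz : par z₁ z₂ := by
      rcases hcond x z₁ z₂ h1 hlt with h | h
      · exact absurd h (hdisj₃ _ _ h2)
      · exact h
    have hzw : z₁ < w := hovlt _ _ hw
    rcases lt_trichotomy w z₂ with hc | hc | hc
    · have hpxw : par x w := by
        rcases hcond x z₁ w h1 hzw with h | h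
        · exact h
        · exact absurd h (hdisj₃ _ _ hw)
      exact hdisj₃ _ _ h2 (hA4 x w z₂ hpxw hc)
    · exact hdisj₃ _ _ hw (hc ▸ hpz)
    · exact hdisj₃ _ _ hw (hA4 z₁ z₂ w hpz hc)
  have key : ∀ x z₁ z₂ : V, (∃ w, ov z₁ w) → (∃ w, ov z₂ w) →
      ov x z₁ → ov x z₂ → z₁ = z₂ := by
    intro x z₁ z₂ h1 h2 ho1 ho2
    rcases lt_trichotomy z₁ z₂ with h | h | h
    · exact (main x z₁ z₂ h1 ho1 ho2 h).elim
    · exact h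
    · exact (main x z₂ z₁ h2 ho2 ho1 h).elim
  refine ⟨key, ?_⟩
  set S := {x : V // ∃ w, ov x w} with hS
  set G := SimpleGraph.fromRel (fun a b : S => ov a.1 b.1) with hG
  -- from adjacency with the smaller endpoint: ov holds in the right direction
  have hadj : ∀ a b : S, G.Adj a b → a.1 < b.1 → ov a.1 b.1 := by
    intro a b hab hlt
    rcases (SimpleGraph.fromRel_adj _ a b).1 hab with ⟨_, h | h⟩
    · exact h
    · exact absurd (hovlt _ _ h) (lt_asymm hlt)
  -- uniqueness of the larger neighbor, at the subtype level
  have huniq : ∀ a b c : S, G.Adj a b → G.Adj a c → a.1 < b.1 → a.1 < c.1 → b = c := by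
    intro a b c hab hac hb hc
    exact Subtype.ext (key a.1 b.1 c.1 b.2 c.2 (hadj a b hab hb) (hadj a c hac hc))
  intro v c hc
  -- take the minimal vertex of the cycle's support
  obtain ⟨m, hmS, hmin⟩ := Finset.exists_min_image c.support.toFinset (fun a : S => a.1)
    ⟨v, List.mem_toFinset.2 c.start_mem_support⟩
  rw [List.mem_toFinset] at hmS
  have hmin' : ∀ y ∈ c.support, m.1 ≤ y.1 := fun y hy =>
    hmin y (List.mem_toFinset.2 hy)
  -- rotate the cycle to start at m
  set c' := c.rotate m hmS with hc'def
  have hc' : c'.IsCycle := hc.rotate hmS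
  have hsupp : ∀ y ∈ c'.support, m.1 ≤ y.1 := by
    intro y hy
    rcases List.mem_cons.1 (c'.support_eq_cons ▸ hy) with h | h
    · exact le_of_eq (congrArg _ h.symm)
    · exact hmin' y (List.mem_of_mem_tail
        ((c.support_rotate m hmS).mem_iff.1 h))
  clear_value c'
  clear hc'def hc hmS hmin hmin'
  cases c' with
  | nil => exact hc'.ne_nil rfl
  | @cons _ u _ h p =>
    -- first neighbor u
    have humem : u ∈ (SimpleGraph.Walk.cons h p).support := by simp
    have hmu : m.1 < u.1 :=
      lt_of_le_of_ne (hsupp u humem) (fun he => h.ne (Subtype.ext he))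
    -- last neighbor w, obtained from the reverse of p
    cases hpr : p.reverse with
    | nil =>
      have hpnil : p = SimpleGraph.Walk.nil := by
        have := congrArg SimpleGraph.Walk.reverse hpr
        rwa [SimpleGraph.Walk.reverse_reverse] at this
      have h3 := hc'.three_le_length
      rw [SimpleGraph.Walk.length_cons, hpnil, SimpleGraph.Walk.length_nil] at h3
      omega
    | @cons _ w _ h' q =>
      have hwmem : w ∈ (SimpleGraph.Walk.cons h p).support := by
        have : w ∈ p.reverse.support := by rw [hpr]; simp
        rw [SimpleGraph.Walk.support_reverse, List.mem_reverse] at this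
        simp [this]
      have hmw : m.1 < w.1 :=
        lt_of_le_of_ne (hsupp w hwmem) (fun he => h'.ne (Subtype.ext he))
      have huw : u = w := huniq m u w h h' hmu hmw
      -- the edge s(m,w) appears in p, but with u = w it's also the first edge
      have hedge : s(m, w) ∈ p.edges := by
        have : s(m, w) ∈ p.reverse.edges := by rw [hpr]; simp
        rwa [SimpleGraph.Walk.edges_reverse, List.mem_reverse] at this
      have hnodup : ((SimpleGraph.Walk.cons h p).edges).Nodup :=
        hc'.isTrail.edges_nodup
      rw [SimpleGraph.Walk.edges_cons, List.nodup_cons] at hnodup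
      exact hnodup.1 (huw ▸ hedge)
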